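/- Let g be a derivator on [0,T] with g(T) < ∞ and let β ∈ L¹_g([0,T); ℂ) satisfy 1 + β(t)Δ⁺g(t) ≠ 0 for all t ∈ [0,T) ∩ D_g. Then the series ∑_{s ∈ [0,T) ∩ D_g} |ln|1 + β(s)Δ⁺g(s)|| and ∑_{s ∈ [0,T) ∩ D_g} |Arg(1 + β(s)Δ⁺g(s))| both converge. -/

import Mathlib

open MeasureTheory Set Function Filter Topology

noncomputable section

/-- A derivator: a non-decreasing, left-continuous function. -/
def IsDerivator (g : ℝ → ℝ) : Prop :=
  Monotone g ∧ ∀ x : ℝ, ContinuousWithinAt g (Set.Iic x) x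

/-- The jump `Δ⁺g(t) = g(t⁺) - g(t)`. -/
def jumpG (g : ℝ → ℝ) (t : ℝ) : ℝ := Function.rightLim g t - g t

/-- The set of discontinuity points of `g`. -/
def Dg (g : ℝ → ℝ) : Set ℝ := {t | 0 < jumpG g t}

/-- The jump part `g^B` of `g`, with base point `a`. -/
def jumpPart (g : ℝ → ℝ) (a : ℝ) : ℝ → ℝ := fun t =>
  if a < t then ∑' s : (Set.Ico a t : Set ℝ), jumpG g s
  else - ∑' s : (Set.Ico t a : Set ℝ), jumpG g s

/-- The continuous part `g^C = g - g^B` of `g`, with base point `a`. -/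
def contPart (g : ℝ → ℝ) (a : ℝ) : ℝ → ℝ := fun t => g t - jumpPart g a t

/-- The Lebesgue–Stieltjes outer measure associated to `g`, generated by
`μ_g([c,d)) = g d - g c` on half-open intervals. -/
def stieltjesOuter (g : ℝ → ℝ) : OuterMeasure ℝ :=
  OuterMeasure.ofFunction
    (fun s => ⨅ (p : ℝ × ℝ) (_ : s = Set.Ico p.1 p.2), ENNReal.ofReal (g p.2 - g p.1))
    (by
      refine le_antisymm ?_ zero_le
      refine le_trans (iInf₂_le ((0 : ℝ), (0 : ℝ)) ?_) ?_ <;> simp)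

open Classical in
/-- The Lebesgue–Stieltjes measure of a non-decreasing left-continuous `g`: the measure with
`μ_g([c,d)) = g d - g c`.  It is realised as the Stieltjes measure of the right-continuous
modification of `g`. -/
def stieltjesMeasure (g : ℝ → ℝ) : Measure ℝ :=
  if h : Monotone g then h.stieltjesFunction.measure else 0

variable {E : Type*} [NormedAddCommGroup E]

/-- `f` is `g`-continuous at `t` relative to the set `s`. -/
def GContWithin (g : ℝ → ℝ) (f : ℝ → E) (s : Set ℝ) (t : ℝ) : Prop :=
  ∀ ε > 0, ∃ δ > 0, ∀ u ∈ s, |g t - g u| < δ → ‖f t - f u‖ < ε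

/-- `f` is `g`-continuous on the set `s`. -/
def GContOn (g : ℝ → ℝ) (f : ℝ → E) (s : Set ℝ) : Prop := ∀ t ∈ s, GContWithin g f s t

/-- `t` lies in `C_g`: `g` is constant in a neighbourhood of `t`. -/
def InCg (g : ℝ → ℝ) (t : ℝ) : Prop :=
  ∃ ε > 0, ∀ u ∈ Set.Ioo (t - ε) (t + ε), ∀ v ∈ Set.Ioo (t - ε) (t + ε), g u = g v

/-- `t ∈ N_g⁻`: `t` is the left endpoint of a constancy interval of `g`, `t ∉ D_g`. -/
def InNgMinus (g : ℝ → ℝ) (t : ℝ) : Prop :=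
  t ∉ Dg g ∧ ¬ InCg g t ∧
    ∃ ε > 0, ∀ u ∈ Set.Ioo t (t + ε), ∀ v ∈ Set.Ioo t (t + ε), g u = g v

/-- `t ∈ N_g⁺`: `t` is the right endpoint of a constancy interval of `g`, `t ∉ D_g`. -/
def InNgPlus (g : ℝ → ℝ) (t : ℝ) : Prop :=
  t ∉ Dg g ∧ ¬ InCg g t ∧
    ∃ ε > 0, ∀ u ∈ Set.Ioo (t - ε) t, ∀ v ∈ Set.Ioo (t - ε) t, g u = g v

/-- The right endpoint `bₙ` of the constancy component of `g` containing `t`. -/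
def compEnd (g : ℝ → ℝ) (t : ℝ) : ℝ := sSup {u | ∀ v ∈ Set.Icc t u, g v = g t}

open Classical in
/-- The Stieltjes `g`-derivative of `f : s → E` at `t`, in the extended sense: at points of `D_g`
one takes the right-hand limit of the difference quotient, at points of `C_g` the right-hand
limit at the right endpoint of the constancy component, and elsewhere the limit of the difference
quotient restricted to points where `g` differs from `g t` (this covers the points of `N_g`). -/
def HasGDerivWithinAt [NormedSpace ℝ E] (g : ℝ → ℝ) (f : ℝ → E) (s : Set ℝ) (t : ℝ) (L : E) :
    Prop :=
  if t ∈ Dg g then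
    Tendsto (fun u => (g u - g t)⁻¹ • (f u - f t)) (𝓝[s ∩ Set.Ioi t] t) (𝓝 L)
  else if InCg g t then
    Tendsto (fun u => (g u - g (compEnd g t))⁻¹ • (f u - f (compEnd g t)))
      (𝓝[s ∩ Set.Ioi (compEnd g t)] (compEnd g t)) (𝓝 L)
  else
    Tendsto (fun u => (g u - g t)⁻¹ • (f u - f t)) (𝓝[s ∩ {u | g u ≠ g t}] t) (𝓝 L)

/-- `v` is `g`-absolutely continuous on `[0,T]`: it is an indefinite `μ_g`-integral. -/
def ACgOn (g : ℝ → ℝ) (v : ℝ → ℂ) (T : ℝ) : Prop :=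
  ∃ h : ℝ → ℂ, MeasureTheory.IntegrableOn h (Set.Ico 0 T) (stieltjesMeasure g) ∧
    ∀ t ∈ Set.Icc 0 T, v t = v 0 + ∫ s in Set.Ico 0 t, h s ∂(stieltjesMeasure g)

end
open Real MeasureTheory

lemma myMeasSingleton (g : ℝ → ℝ) (hg : IsDerivator g) (a : ℝ) :
    stieltjesMeasure g {a} = ENNReal.ofReal (jumpG g a) := by
  have hm : Monotone g := hg.1
  rw [stieltjesMeasure, dif_pos hm, StieltjesFunction.measure_singleton]
  have hF : hm.stieltjesFunction a = Function.rightLim g a := hm.stieltjesFunction_eq a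
  have hleft : Function.leftLim (⇑hm.stieltjesFunction) a = g a := by
    apply leftLim_eq_of_tendsto (α := ℝ) (β := ℝ)
    · have hg2 : Filter.Tendsto g (nhdsWithin a (Set.Iio a)) (nhds (g a)) :=
        (hg.2 a).mono_left (nhdsWithin_mono a Set.Iio_subset_Iic_self)
      refine tendsto_of_tendsto_of_tendsto_of_le_of_le' hg2 tendsto_const_nhds ?_ ?_
      · filter_upwards [self_mem_nhdsWithin] with u _
        rw [hm.stieltjesFunction_eq]
        exact hm.le_rightLim le_rfl
      · filter_upwards [self_mem_nhdsWithin] with u hu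
        rw [hm.stieltjesFunction_eq]
        exact hm.rightLim_le hu
  rw [hF, hleft, jumpG]

lemma myCountable (g : ℝ → ℝ) (hg : IsDerivator g) : (Dg g).Countable := by
  refine (hg.1.countable_not_continuousAt).mono ?_
  intro t ht hcont
  have : Function.rightLim g t = g t :=
    rightLim_eq_of_tendsto
      (hcont.tendsto.mono_left nhdsWithin_le_nhds)
  simp only [Dg, jumpG, Set.mem_setOf_eq, this] at ht
  linarith

lemma myArgAbsLe {z : ℂ} (hz : 0 < z.re) : |Complex.arg z| ≤ |z.im| / z.re := by
  set θ := Complex.arg z with hθdef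
  have hlt : |θ| < π / 2 := Complex.abs_arg_lt_pi_div_two_iff.2 (Or.inl hz)
  have htan : Real.tan θ = z.im / z.re := Complex.tan_arg z
  rcases le_or_gt 0 θ with h0 | h0
  · have h1 : θ ≤ Real.tan θ := Real.le_tan h0 (lt_of_abs_lt hlt)
    rw [abs_of_nonneg h0]
    calc θ ≤ z.im / z.re := htan ▸ h1
      _ ≤ |z.im| / z.re := by gcongr; exact le_abs_self _
  · have h1 : -θ ≤ Real.tan (-θ) := by
      refine Real.le_tan (by linarith) ?_
      have := neg_lt_of_abs_lt hlt; linarith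
    rw [Real.tan_neg, htan] at h1
    rw [abs_of_neg h0]
    calc -θ ≤ -(z.im / z.re) := h1
      _ ≤ |z.im| / z.re := by rw [neg_div']; gcongr; exact neg_le_abs _

lemma myLogBound {z : ℂ} (hz : ‖z‖ ≤ 1/4) :
    |Real.log (‖1 + z‖)| ≤ 2 * ‖z‖ := by
  set a := ‖z‖ with ha
  have ha0 : 0 ≤ a := norm_nonneg z
  have hr1 : ‖1 + z‖ ≤ 1 + a := by
    simpa using norm_add_le 1 z
  have hr2 : 1 - a ≤ ‖1 + z‖ := by
    have h := norm_add_le (1 + z) (-z)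
    simp only [add_neg_cancel_right, norm_neg] at h
    rw [norm_one] at h; linarith
  set r := ‖1 + z‖ with hrdef
  have hrpos : 0 < r := by simp only [hrdef]; linarith
  rw [abs_le]
  constructor
  · have h1 : Real.log r⁻¹ ≤ r⁻¹ - 1 := Real.log_le_sub_one_of_pos (by positivity)
    rw [Real.log_inv] at h1
    have h2 : r⁻¹ ≤ 1 + 2 * a := by
      rw [inv_le_iff_one_le_mul₀ hrpos]  -- guess
      nlinarith
    linarith
  · have h1 : Real.log r ≤ r - 1 := Real.log_le_sub_one_of_pos hrpos
    linarith

lemma myArgBound {z : ℂ} (hz : ‖z‖ ≤ 1/4) :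
    |Complex.arg (1 + z)| ≤ 2 * ‖z‖ := by
  set a := ‖z‖ with ha
  have ha0 : 0 ≤ a := norm_nonneg z
  have hre' : -a ≤ z.re := neg_le_of_abs_le (Complex.abs_re_le_norm z)
  have him : |z.im| ≤ a := Complex.abs_im_le_norm z
  have hre : (3:ℝ)/4 ≤ (1 + z).re := by
    simp only [Complex.add_re, Complex.one_re]; linarith
  have hrepos : 0 < (1 + z).re := by linarith
  refine (myArgAbsLe hrepos).trans ?_
  rw [div_le_iff₀ hrepos]
  have him' : |(1 + z).im| ≤ a := by
    simp only [Complex.add_im, Complex.one_im, zero_add]; exact him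
  nlinarith

/-- for `β ∈ L¹_g([0,T); ℂ)` with `1 + β(t)Δ⁺g(t) ≠ 0` on `[0,T) ∩ D_g`, the
series `∑ |ln|1 + β(s)Δ⁺g(s)||` and `∑ |Arg(1 + β(s)Δ⁺g(s))|` over `s ∈ [0,T) ∩ D_g`
converge. -/
theorem stmt14 (g : ℝ → ℝ) (hg : IsDerivator g) (T : ℝ) (hT : 0 < T) (β : ℝ → ℂ)
    (hβ : MeasureTheory.IntegrableOn β (Set.Ico 0 T) (stieltjesMeasure g))
    (hne : ∀ t ∈ Set.Ico 0 T ∩ Dg g, 1 + β t * (jumpG g t : ℂ) ≠ 0) :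
    Summable (fun s : (Set.Ico 0 T ∩ Dg g : Set ℝ) =>
      |Real.log (‖1 + β s.1 * (jumpG g s.1 : ℂ)‖)|) ∧
    Summable (fun s : (Set.Ico 0 T ∩ Dg g : Set ℝ) =>
      |Complex.arg (1 + β s.1 * (jumpG g s.1 : ℂ))|) := by
  set S : Set ℝ := Set.Ico 0 T ∩ Dg g with hSdef
  have hSc : S.Countable := (myCountable g hg).mono Set.inter_subset_right
  have hfin : ∫⁻ a in S, (‖β a‖₊ : ENNReal) ∂(stieltjesMeasure g) < ⊤ :=
    lt_of_le_of_lt (lintegral_mono_set Set.inter_subset_left) hβ.2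
  rw [lintegral_countable _ hSc] at hfin
  have hsum : Summable (fun s : S => ‖β s.1‖ * jumpG g s.1) := by
    have h := ENNReal.summable_toReal hfin.ne
    refine h.congr fun s => ?_
    have hjpos : 0 < jumpG g s.1 := s.2.2
    rw [myMeasSingleton g hg, ENNReal.toReal_mul, ENNReal.toReal_ofReal hjpos.le,
      ENNReal.coe_toReal, coe_nnnorm]
  have hx : ∀ s : S, ‖β s.1 * (jumpG g s.1 : ℂ)‖ = ‖β s.1‖ * jumpG g s.1 := by
    intro s
    rw [norm_mul, Complex.norm_real, Real.norm_eq_abs, abs_of_pos s.2.2]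
  have hsum' : Summable (fun s : S => ‖β s.1 * (jumpG g s.1 : ℂ)‖) :=
    hsum.congr fun s => (hx s).symm
  have hsmall : ∀ᶠ s : S in Filter.cofinite,
      ‖β s.1 * (jumpG g s.1 : ℂ)‖ < 1/4 :=
    hsum'.tendsto_cofinite_zero.eventually_lt_const (by norm_num)
  constructor
  · refine Summable.of_norm_bounded_eventually
      (g := fun s : S => 2 * ‖β s.1 * (jumpG g s.1 : ℂ)‖) (hsum'.mul_left 2) ?_
    filter_upwards [hsmall] with s hs
    rw [Real.norm_eq_abs, abs_abs]
    exact myLogBound hs.le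
  · refine Summable.of_norm_bounded_eventually
      (g := fun s : S => 2 * ‖β s.1 * (jumpG g s.1 : ℂ)‖) (hsum'.mul_left 2) ?_
    filter_upwards [hsmall] with s hs
    rw [Real.norm_eq_abs, abs_abs]
    exact myArgBound hs.le
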